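/- Let v : ℝ → ℝ be continuous with v(t) > η for all t ≥ 0, let 0 < λ < η, and let x : ℝ → ℝ be a bounded measurable function such that e^{λt} x(t) → 0 as t → ∞. Then e^{λt} ∫₀ᵗ exp(−∫ₛᵗ v(u) du)·x(s) ds → 0 as t → ∞. -/

import Mathlib

open Real Filter MeasureTheory intervalIntegral

lemma ii_mul (φ g : ℝ → ℝ) (hφ : Continuous φ) (hgm : Measurable g) (M : ℝ)
    (hgb : ∀ s, |g s| ≤ M) (a b : ℝ) :
    IntervalIntegrable (fun s => φ s * g s) volume a b := by
  apply IntervalIntegrable.mono_fun ((hφ.mul continuous_const).intervalIntegrable a b)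
    ((hφ.measurable.mul hgm).aestronglyMeasurable)
  filter_upwards with s
  simp only [Pi.mul_apply, Real.norm_eq_abs, abs_mul]
  calc |φ s| * |g s| ≤ |φ s| * M := by gcongr; exact hgb s
    _ ≤ |φ s| * |M| := by gcongr; exact le_abs_self M

lemma conv_tendsto (g : ℝ → ℝ) (hgm : Measurable g) (hg0 : ∀ s, 0 ≤ g s) (G : ℝ)
    (hgb : ∀ s, g s ≤ G) (hgt : Tendsto g atTop (nhds 0)) (c : ℝ) (hc : 0 < c) :
    Tendsto (fun t => ∫ s in (0:ℝ)..t, Real.exp (-(c*(t-s))) * g s) atTop (nhds 0) := by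
  have hG : 0 ≤ G := (hg0 0).trans (hgb 0)
  have hgb' : ∀ s, |g s| ≤ G := fun s => by rw [abs_of_nonneg (hg0 s)]; exact hgb s
  have hcontexp : ∀ t : ℝ, Continuous (fun s : ℝ => Real.exp (-(c*(t-s)))) := by
    intro t; exact Real.continuous_exp.comp (by continuity)
  have i1 : ∀ t a b : ℝ, IntervalIntegrable (fun s => Real.exp (-(c*(t-s))) * g s) volume a b :=
    fun t a b => ii_mul _ _ (hcontexp t) hgm G hgb' a b
  rw [Metric.tendsto_atTop]
  intro ε hε
  obtain ⟨T₀, hT₀⟩ := Metric.tendsto_atTop.mp hgt (ε*c/2) (by positivity)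
  set T : ℝ := max T₀ 0 with hTdef
  have hT0 : (0:ℝ) ≤ T := le_max_right _ _
  have hdec : Tendsto (fun t => Real.exp (-(c*(t-T))) * (G*T)) atTop (nhds 0) := by
    have h1 : Tendsto (fun t : ℝ => -(c*(t-T))) atTop atBot := by
      have h2 : Tendsto (fun t : ℝ => c*(t-T)) atTop atTop := by
        apply Tendsto.const_mul_atTop hc
        exact tendsto_atTop_add_const_right atTop (-T) tendsto_id
      exact tendsto_neg_atTop_atBot.comp h2
    have := (Real.tendsto_exp_atBot.comp h1).mul_const (G*T)
    simpa using this
  obtain ⟨N₁, hN₁⟩ := Metric.tendsto_atTop.mp hdec (ε/2) (by positivity)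
  refine ⟨max N₁ T, fun t ht => ?_⟩
  have htT : T ≤ t := le_trans (le_max_right _ _) ht
  have htN : N₁ ≤ t := le_trans (le_max_left _ _) ht
  have ht0 : (0:ℝ) ≤ t := le_trans hT0 htT
  have hsplit : (∫ s in (0:ℝ)..t, Real.exp (-(c*(t-s))) * g s)
      = (∫ s in (0:ℝ)..T, Real.exp (-(c*(t-s))) * g s)
        + ∫ s in T..t, Real.exp (-(c*(t-s))) * g s :=
    (intervalIntegral.integral_add_adjacent_intervals (i1 t 0 T) (i1 t T t)).symm
  have hApos : 0 ≤ ∫ s in (0:ℝ)..T, Real.exp (-(c*(t-s))) * g s :=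
    intervalIntegral.integral_nonneg hT0 (fun u _ => mul_nonneg (Real.exp_pos _).le (hg0 u))
  have hBpos : 0 ≤ ∫ s in T..t, Real.exp (-(c*(t-s))) * g s :=
    intervalIntegral.integral_nonneg htT (fun u _ => mul_nonneg (Real.exp_pos _).le (hg0 u))
  have hA : (∫ s in (0:ℝ)..T, Real.exp (-(c*(t-s))) * g s) < ε/2 := by
    have h1 : (∫ s in (0:ℝ)..T, Real.exp (-(c*(t-s))) * g s)
        ≤ ∫ s in (0:ℝ)..T, Real.exp (-(c*(t-T))) * G := by
      apply intervalIntegral.integral_mono_on hT0 (i1 t 0 T) intervalIntegrable_const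
      intro s hs
      have hexp : Real.exp (-(c*(t-s))) ≤ Real.exp (-(c*(t-T))) := by
        apply Real.exp_le_exp.mpr
        nlinarith [hs.2]
      exact mul_le_mul hexp (hgb s) (hg0 s) (Real.exp_pos _).le
    have h2 : (∫ s in (0:ℝ)..T, Real.exp (-(c*(t-T))) * G)
        = Real.exp (-(c*(t-T))) * (G*T) := by
      rw [intervalIntegral.integral_const]; simp; ring
    have h3 : Real.exp (-(c*(t-T))) * (G*T) < ε/2 := by
      have := hN₁ t htN
      rw [dist_zero_right, Real.norm_eq_abs] at this
      exact lt_of_le_of_lt (le_abs_self _) this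
    linarith [h1.trans_eq h2]
  have hB : (∫ s in T..t, Real.exp (-(c*(t-s))) * g s) ≤ ε/2 := by
    have h1 : (∫ s in T..t, Real.exp (-(c*(t-s))) * g s)
        ≤ ∫ s in T..t, Real.exp (-(c*(t-s))) * (ε*c/2) := by
      apply intervalIntegral.integral_mono_on htT (i1 t T t)
        (((hcontexp t).mul continuous_const).intervalIntegrable _ _)
      intro s hs
      have hgs : g s ≤ ε*c/2 := by
        have := hT₀ s (le_trans (le_max_left _ _) hs.1)
        rw [dist_zero_right, Real.norm_eq_abs] at this
        exact (le_abs_self _).trans this.le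
      exact mul_le_mul_of_nonneg_left hgs (Real.exp_pos _).le
    have h2 : (∫ s in T..t, Real.exp (-(c*(t-s))) * (ε*c/2))
        = (∫ s in T..t, Real.exp (-(c*(t-s)))) * (ε*c/2) :=
      intervalIntegral.integral_mul_const _ _
    have h3 : (∫ s in T..t, Real.exp (-(c*(t-s)))) ≤ 1/c := by
      have key : (∫ s in T..t, Real.exp (-(c*(t-s))))
          = Real.exp (-(c*(t-t)))/c - Real.exp (-(c*(t-T)))/c := by
        apply intervalIntegral.integral_eq_sub_of_hasDerivAt
          (f := fun s => Real.exp (-(c*(t-s)))/c)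
        · intro s hs
          have h : HasDerivAt (fun s : ℝ => -(c*(t-s))) c s := by
            have := (((hasDerivAt_id s).const_sub t).const_mul c).neg
            simpa [Pi.neg_def] using this
          have := h.exp.div_const c
          simpa [mul_div_assoc, div_self hc.ne'] using this
        · exact (hcontexp t).intervalIntegrable T t
      rw [key]
      have : 0 ≤ Real.exp (-(c*(t-T)))/c := div_nonneg (Real.exp_pos _).le hc.le
      simp only [sub_self, mul_zero, neg_zero, Real.exp_zero]
      linarith
    have h4 : (∫ s in T..t, Real.exp (-(c*(t-s)))) * (ε*c/2) ≤ (1/c) * (ε*c/2) :=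
      mul_le_mul_of_nonneg_right h3 (by positivity)
    have h5 : (1/c) * (ε*c/2) = ε/2 := by field_simp
    linarith [h1.trans_eq h2]
  rw [dist_zero_right, Real.norm_eq_abs, abs_of_nonneg (by rw [hsplit]; linarith), hsplit]
  linarith

theorem stmt_4 (v x : ℝ → ℝ) (hv : Continuous v) (η lam : ℝ) (hη : 0 < lam)
    (hlam : lam < η) (hvη : ∀ t : ℝ, 0 ≤ t → η < v t)
    (hxm : Measurable x) (M : ℝ) (hxb : ∀ t : ℝ, |x t| ≤ M)
    (hx0 : Tendsto (fun t : ℝ => Real.exp (lam * t) * x t) atTop (nhds 0)) :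
    Tendsto (fun t : ℝ =>
        Real.exp (lam * t) * ∫ s in (0:ℝ)..t, Real.exp (-∫ u in s..t, v u) * x s)
      atTop (nhds 0) := by
  have hc : 0 < η - lam := by linarith
  set g : ℝ → ℝ := fun s => |Real.exp (lam * s) * x s| with hgdef
  have hgm : Measurable g :=
    ((Real.measurable_exp.comp (measurable_const.mul measurable_id)).mul hxm).abs
  have hg0 : ∀ s, 0 ≤ g s := fun s => abs_nonneg _
  have hgt : Tendsto g atTop (nhds 0) := by simpa [hgdef, abs_mul] using hx0.abs
  have hM : 0 ≤ M := (abs_nonneg _).trans (hxb 0)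
  obtain ⟨T₀, hT₀⟩ := Metric.tendsto_atTop.mp hx0 1 one_pos
  set G : ℝ := max 1 (Real.exp (lam * max T₀ 0) * M) with hGdef
  have hgb : ∀ s, g s ≤ G := by
    intro s
    rcases le_total T₀ s with h | h
    · have h1 := hT₀ s h
      rw [dist_zero_right, Real.norm_eq_abs] at h1
      exact le_trans h1.le (le_max_left _ _)
    · have h1 : g s = Real.exp (lam*s) * |x s| := by
        simp [hgdef, abs_mul, abs_of_pos (Real.exp_pos _)]
      have h2 : Real.exp (lam*s) ≤ Real.exp (lam * max T₀ 0) := by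
        apply Real.exp_le_exp.mpr
        have h3 : s ≤ max T₀ 0 := le_trans h (le_max_left _ _)
        nlinarith
      calc g s = Real.exp (lam*s) * |x s| := h1
        _ ≤ Real.exp (lam*max T₀ 0) * M :=
            mul_le_mul h2 (hxb s) (abs_nonneg _) (Real.exp_pos _).le
        _ ≤ G := le_max_right _ _
  have hconv := conv_tendsto g hgm hg0 G hgb hgt (η - lam) hc
  apply squeeze_zero_norm' ?_ hconv
  filter_upwards [eventually_ge_atTop (0:ℝ)] with t ht0
  have hφcont : Continuous (fun s : ℝ => Real.exp (-∫ u in s..t, v u)) := by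
    have h1 : Continuous (fun s : ℝ => ∫ u in t..s, v u) :=
      intervalIntegral.continuous_primitive (fun a b => hv.intervalIntegrable a b) t
    have h2 : (fun s : ℝ => Real.exp (-∫ u in s..t, v u))
        = fun s => Real.exp (∫ u in t..s, v u) := by
      funext s; rw [intervalIntegral.integral_symm s t]
    rw [h2]; exact Real.continuous_exp.comp h1
  have iorig : IntervalIntegrable (fun s => Real.exp (-∫ u in s..t, v u) * x s) volume 0 t :=
    ii_mul _ _ hφcont hxm M hxb 0 t
  have irhs : IntervalIntegrable (fun s => Real.exp (-((η-lam)*(t-s))) * g s) volume 0 t :=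
    ii_mul _ _ (Real.continuous_exp.comp (by continuity)) hgm G
      (fun s => by rw [abs_of_nonneg (hg0 s)]; exact hgb s) 0 t
  rw [Real.norm_eq_abs, abs_mul, abs_of_pos (Real.exp_pos _)]
  calc Real.exp (lam*t) * |∫ s in (0:ℝ)..t, Real.exp (-∫ u in s..t, v u) * x s|
      ≤ Real.exp (lam*t) * ∫ s in (0:ℝ)..t, |Real.exp (-∫ u in s..t, v u) * x s| :=
        mul_le_mul_of_nonneg_left
          (intervalIntegral.abs_integral_le_integral_abs ht0) (Real.exp_pos _).le
    _ = ∫ s in (0:ℝ)..t, Real.exp (lam*t) * |Real.exp (-∫ u in s..t, v u) * x s| :=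
        (intervalIntegral.integral_const_mul _ _).symm
    _ ≤ ∫ s in (0:ℝ)..t, Real.exp (-((η-lam)*(t-s))) * g s := by
        apply intervalIntegral.integral_mono_on ht0 (iorig.abs.const_mul _) irhs
        intro s hs
        have hsv : η * (t - s) ≤ ∫ u in s..t, v u := by
          have h1 : (∫ u in s..t, (η:ℝ)) ≤ ∫ u in s..t, v u := by
            apply intervalIntegral.integral_mono_on hs.2 intervalIntegrable_const
              (hv.intervalIntegrable s t)
            intro u hu; exact (hvη u (le_trans hs.1 hu.1)).le
          rw [intervalIntegral.integral_const, smul_eq_mul] at h1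
          nlinarith
        rw [abs_mul, abs_of_pos (Real.exp_pos _)]
        have hgs : g s = Real.exp (lam*s) * |x s| := by
          simp [hgdef, abs_mul, abs_of_pos (Real.exp_pos _)]
        rw [hgs]
        have hkey : Real.exp (lam*t) * Real.exp (-(η*(t-s)))
            = Real.exp (-((η-lam)*(t-s))) * Real.exp (lam*s) := by
          rw [← Real.exp_add, ← Real.exp_add]; congr 1; ring
        calc Real.exp (lam*t) * (Real.exp (-∫ u in s..t, v u) * |x s|)
            ≤ Real.exp (lam*t) * (Real.exp (-(η*(t-s))) * |x s|) := by
              gcongr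
          _ = (Real.exp (lam*t) * Real.exp (-(η*(t-s)))) * |x s| := by ring
          _ = (Real.exp (-((η-lam)*(t-s))) * Real.exp (lam*s)) * |x s| := by rw [hkey]
          _ = Real.exp (-((η-lam)*(t-s))) * (Real.exp (lam*s) * |x s|) := by ring
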